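/- Let γ > 0 and let f : [0,1] → ℝ be γ-Hölder continuous. Then ‖f‖_∞ ≤ 2 max{ ‖f‖_{L²}, ‖f‖_{L²}^{2γ/(2γ+1)} ‖f‖_γ^{1/(2γ+1)} }, where ‖f‖_∞ is the supremum norm on [0,1], ‖f‖_{L²} = (∫_0^1 f(t)² dt)^{1/2}, and ‖f‖_γ = sup_{0≤s<t≤1} |f(t)−f(s)|/|t−s|^γ + ‖f‖_∞ is the γ-Hölder norm. -/

import Mathlib

open MeasureTheory Set

noncomputable section

/-- sup-norm/L²-norm/Hölder-norm interpolation on `[0,1]`: for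
`γ > 0` and `f : [0,1] → ℝ` γ-Hölder continuous,
`‖f‖_∞ ≤ 2 max{ ‖f‖_{L²}, ‖f‖_{L²}^{2γ/(2γ+1)} ‖f‖_γ^{1/(2γ+1)} }`,
where `‖f‖_γ` is the γ-Hölder norm (Hölder seminorm plus sup norm), expressed through
any admissible Hölder constant `K` as `K + ‖f‖_∞` (the inequality for every such `K`
is equivalent to the one for the Hölder seminorm). -/
theorem sup_le_L2_holder_interpolation
    (γ : ℝ) (hγ : 0 < γ) (f : ℝ → ℝ) (K : ℝ) (hK : 0 ≤ K)
    (hf : ∀ s ∈ Set.Icc (0:ℝ) 1, ∀ t ∈ Set.Icc (0:ℝ) 1, |f t - f s| ≤ K * |t - s| ^ γ) :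
    (⨆ t : Set.Icc (0:ℝ) 1, |f (t:ℝ)|) ≤
      2 * max (Real.sqrt (∫ t in Set.Icc (0:ℝ) 1, (f t) ^ 2))
        ((Real.sqrt (∫ t in Set.Icc (0:ℝ) 1, (f t) ^ 2)) ^ (2*γ/(2*γ+1)) *
          (K + ⨆ t : Set.Icc (0:ℝ) 1, |f (t:ℝ)|) ^ (1/(2*γ+1))) := by
  -- f is continuous on [0,1]
  have hcont : ContinuousOn f (Set.Icc (0:ℝ) 1) := by
    intro s hs
    rw [Metric.continuousWithinAt_iff]
    intro ε hε
    refine ⟨(ε/(K+1)) ^ (1/γ), Real.rpow_pos_of_pos (div_pos hε (by linarith)) _, ?_⟩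
    intro t ht hts
    have hd : dist t s = |t - s| := Real.dist_eq t s
    have h1 := hf s hs t ht
    have h2 : |t - s| ^ γ < ε/(K+1) := by
      have h3 : |t - s| < (ε/(K+1)) ^ (1/γ) := by rw [← hd]; exact hts
      calc |t-s|^γ < ((ε/(K+1))^(1/γ))^γ := Real.rpow_lt_rpow (abs_nonneg _) h3 hγ
        _ = ε/(K+1) := by
            rw [← Real.rpow_mul (le_of_lt (div_pos hε (by linarith))),
              one_div_mul_cancel hγ.ne', Real.rpow_one]
    rw [Real.dist_eq]
    have h4 : K * |t - s| ^ γ ≤ K * (ε/(K+1)) :=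
      mul_le_mul_of_nonneg_left h2.le hK
    have h5 : K * (ε/(K+1)) < ε := by
      rw [mul_div_assoc']
      rw [div_lt_iff₀ (by linarith)]
      nlinarith
    linarith
  have hne : (Set.Icc (0:ℝ) 1).Nonempty := ⟨0, by norm_num⟩
  obtain ⟨t0, ht0, hmax⟩ := isCompact_Icc.exists_isMaxOn hne hcont.abs
  set M := |f t0| with hMdef
  have hM0 : 0 ≤ M := abs_nonneg _
  have hS : (⨆ t : Set.Icc (0:ℝ) 1, |f (t:ℝ)|) = M := by
    apply le_antisymm
    · exact ciSup_le fun t => hmax t.2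
    · exact le_ciSup ⟨M, by rintro x ⟨t, rfl⟩; exact hmax t.2⟩ (⟨t0, ht0⟩ : Set.Icc (0:ℝ) 1)
  rw [hS]
  set I := ∫ t in Set.Icc (0:ℝ) 1, (f t)^2 with hIdef
  have hI0 : 0 ≤ I := setIntegral_nonneg measurableSet_Icc fun t _ => sq_nonneg _
  set N := Real.sqrt I with hNdef
  have hN0 : 0 ≤ N := Real.sqrt_nonneg _
  have hInt : IntegrableOn (fun t => (f t)^2) (Set.Icc (0:ℝ) 1) :=
    (hcont.pow 2).integrableOn_compact isCompact_Icc
  -- key claim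
  have key : ∀ δ' : ℝ, 0 < δ' → δ' ≤ 1 →
      (∀ t ∈ Set.Icc (0:ℝ) 1, |t - t0| ≤ δ' → M/2 ≤ |f t|) →
      (M/2)^2 * δ' ≤ I := by
    intro δ' hδpos hδ1 hlow
    set a := max (t0 - δ') 0 with ha
    set b := min (t0 + δ') 1 with hb
    have ha0 : 0 ≤ a := le_max_right _ _
    have hb1 : b ≤ 1 := min_le_right _ _
    have hab : δ' ≤ b - a := by
      rcases le_total (t0 + δ') 1 with h | h
      · have h1 : b = t0 + δ' := min_eq_left h
        have h2 : a ≤ t0 := max_le (by linarith) ht0.1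
        linarith
      · have h1 : b = 1 := min_eq_right h
        have h2 : a ≤ 1 - δ' := max_le (by linarith [ht0.2]) (by linarith)
        linarith
    have hsub : Set.Icc a b ⊆ Set.Icc (0:ℝ) 1 := Set.Icc_subset_Icc ha0 hb1
    have hlow2 : ∀ t ∈ Set.Icc a b, (M/2)^2 ≤ (f t)^2 := by
      intro t ht
      have h1 : |t - t0| ≤ δ' := by
        rw [abs_le]
        constructor
        · have := ht.1; linarith [le_max_left (t0 - δ') 0]
        · have := ht.2; linarith [min_le_left (t0 + δ') 1]
      have h2 := hlow t (hsub ht) h1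
      calc (M/2)^2 ≤ |f t|^2 := pow_le_pow_left₀ (by linarith) h2 2
        _ = (f t)^2 := sq_abs _
    calc (M/2)^2 * δ' ≤ (M/2)^2 * (b - a) := by nlinarith [sq_nonneg (M/2)]
      _ = ∫ _ in Set.Icc a b, (M/2)^2 := by
          rw [setIntegral_const, measureReal_def, Real.volume_Icc, ENNReal.toReal_ofReal (by linarith),
            smul_eq_mul]; ring
      _ ≤ ∫ t in Set.Icc a b, (f t)^2 :=
          setIntegral_mono_on (integrableOn_const measure_Icc_lt_top.ne)
            (hInt.mono_set hsub) measurableSet_Icc hlow2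
      _ ≤ I := setIntegral_mono_set hInt (Filter.Eventually.of_forall fun t => sq_nonneg _)
            (HasSubset.Subset.eventuallyLE hsub)
  rcases hM0.eq_or_lt with h0 | hMpos
  · -- M = 0
    have hmx := le_max_left N (N ^ (2*γ/(2*γ+1)) * (K + M) ^ (1/(2*γ+1)))
    linarith [h0]
  rcases le_or_gt K (M/2) with hK1 | hK2
  · -- K ≤ M/2 : use δ' = 1
    have hkey := key 1 one_pos le_rfl ?_
    · have h1 : (M/2)^2 ≤ I := by linarith
      have h2 : M/2 ≤ N := by
        rw [hNdef]
        calc M/2 = Real.sqrt ((M/2)^2) := (Real.sqrt_sq (by linarith)).symm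
          _ ≤ Real.sqrt I := Real.sqrt_le_sqrt h1
      have h3 := le_max_left N (N ^ (2*γ/(2*γ+1)) * (K + M) ^ (1/(2*γ+1)))
      linarith
    · intro t ht hdist
      have h1 := hf t ht t0 ht0
      have h2 : |t0 - t| ≤ 1 := by
        rw [abs_le]; constructor <;> linarith [ht.1, ht.2, ht0.1, ht0.2]
      have h3 : |t0 - t| ^ γ ≤ 1 := Real.rpow_le_one (abs_nonneg _) h2 hγ.le
      have h4 : |f t0 - f t| ≤ K := by
        calc |f t0 - f t| ≤ K * |t0 - t| ^ γ := h1
          _ ≤ K * 1 := mul_le_mul_of_nonneg_left h3 hK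
          _ = K := mul_one K
      have h5 : M - |f t| ≤ |f t0 - f t| := by
        have := abs_sub_abs_le_abs_sub (f t0) (f t)
        linarith
      linarith
  · -- K > M/2 > 0
    have hKpos : 0 < K := by linarith
    set δ := (M/(2*K)) ^ (1/γ) with hδdef
    have hbase : 0 < M/(2*K) := div_pos hMpos (by linarith)
    have hδpos : 0 < δ := Real.rpow_pos_of_pos hbase _
    have hδ1 : δ ≤ 1 := Real.rpow_le_one hbase.le
      (by rw [div_le_one (by linarith)]; linarith) (by positivity)
    have hδγ : δ ^ γ = M/(2*K) := by
      rw [hδdef, ← Real.rpow_mul hbase.le, one_div_mul_cancel hγ.ne', Real.rpow_one]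
    have hKδ : K * δ ^ γ = M/2 := by
      rw [hδγ]; field_simp
    have hkey := key δ hδpos hδ1 ?_
    · -- (M/2)^2 * δ ≤ I ; conclude
      have hexp : M/2 ≤ I ^ (γ/(2*γ+1)) * K ^ (1/(2*γ+1)) := by
        have h1 : (M/2) ^ ((2*γ+1)/γ) ≤ I * K ^ (1/γ) := by
          have hM2 : (0:ℝ) < M/2 := by linarith
          have hδeq : δ = (M/2) ^ (1/γ) / K ^ (1/γ) := by
            rw [hδdef]
            rw [show M/(2*K) = (M/2)/K by ring, Real.div_rpow hM2.le hKpos.le]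
          have h2 : (M/2)^2 * δ = (M/2) ^ ((2*γ+1)/γ) / K ^ (1/γ) := by
            rw [hδeq, show ((M/2:ℝ))^2 = (M/2) ^ (2:ℝ) by
              rw [← Real.rpow_natCast (M/2) 2]; norm_num]
            rw [mul_div_assoc', ← Real.rpow_add hM2]
            rw [show (2:ℝ) + 1/γ = (2*γ+1)/γ by field_simp]
          calc (M/2) ^ ((2*γ+1)/γ) = (M/2)^2 * δ * K ^ (1/γ) := by
                rw [h2, div_mul_cancel₀ _ (Real.rpow_pos_of_pos hKpos (1/γ)).ne']
            _ ≤ I * K ^ (1/γ) :=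
                mul_le_mul_of_nonneg_right hkey (Real.rpow_nonneg hKpos.le _)
        have h3 := Real.rpow_le_rpow (Real.rpow_nonneg (by linarith : (0:ℝ) ≤ M/2) _) h1
          (by positivity : (0:ℝ) ≤ γ/(2*γ+1))
        rw [← Real.rpow_mul (by linarith : (0:ℝ) ≤ M/2),
          div_mul_div_comm, mul_comm (2*γ+1) γ, div_self (by positivity), Real.rpow_one] at h3
        have h4 : (I * K ^ (1/γ)) ^ (γ/(2*γ+1)) = I ^ (γ/(2*γ+1)) * K ^ (1/(2*γ+1)) := by
          rw [Real.mul_rpow hI0 (Real.rpow_nonneg hKpos.le _),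
            ← Real.rpow_mul hKpos.le,
            show 1/γ * (γ/(2*γ+1)) = 1/(2*γ+1) by field_simp]
        rw [h4] at h3
        exact h3
      have hNI : N ^ (2*γ/(2*γ+1)) = I ^ (γ/(2*γ+1)) := by
        rw [hNdef, Real.sqrt_eq_rpow, ← Real.rpow_mul hI0,
          show 1/2 * (2*γ/(2*γ+1)) = γ/(2*γ+1) by field_simp]
      have hKM : K ^ (1/(2*γ+1)) ≤ (K+M) ^ (1/(2*γ+1)) :=
        Real.rpow_le_rpow hKpos.le (by linarith) (by positivity)
      have hfin : M/2 ≤ N ^ (2*γ/(2*γ+1)) * (K+M) ^ (1/(2*γ+1)) := by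
        rw [hNI]
        calc M/2 ≤ I ^ (γ/(2*γ+1)) * K ^ (1/(2*γ+1)) := hexp
          _ ≤ I ^ (γ/(2*γ+1)) * (K+M) ^ (1/(2*γ+1)) :=
            mul_le_mul_of_nonneg_left hKM (Real.rpow_nonneg hI0 _)
      have hm := le_max_right N (N ^ (2*γ/(2*γ+1)) * (K + M) ^ (1/(2*γ+1)))
      linarith
    · intro t ht hdist
      have h1 := hf t ht t0 ht0
      have h2 : |t0 - t| ^ γ ≤ δ ^ γ := by
        apply Real.rpow_le_rpow (abs_nonneg _) _ hγ.le
        rw [abs_sub_comm]; exact hdist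
      have h4 : |f t0 - f t| ≤ M/2 := by
        calc |f t0 - f t| ≤ K * |t0 - t| ^ γ := h1
          _ ≤ K * δ ^ γ := mul_le_mul_of_nonneg_left h2 hK
          _ = M/2 := hKδ
      have h5 : M - |f t| ≤ |f t0 - f t| := by
        have := abs_sub_abs_le_abs_sub (f t0) (f t)
        linarith
      linarith

end
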